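/- Fix s ∈ ℝ, Y ∈ ℝ^{n+1}, and let ρ(X,t) := (4π(s−t))^{−n/2} exp(−|X−Y|²/(4(s−t))) for X ∈ ℝ^{n+1} and t < s. Then for every unit vector w ∈ ℝ^{n+1}, every X ∈ ℝ^{n+1} and every t < s: (w·Dρ)²/ρ + (I − w⊗w) : D²ρ + ∂_t ρ = 0, where D and D² denote the gradient and Hessian in X, I is the (n+1)×(n+1) identity matrix, and A:B := tr(AB). -/

import Mathlib

open Set Real
open scoped RealInnerProductSpace

noncomputable section

abbrev Eucl (n : ℕ) := EuclideanSpace ℝ (Fin n)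

/-- partial derivative in the `i`-th coordinate direction -/
def pd {m : ℕ} (g : Eucl m → ℝ) (i : Fin m) (x : Eucl m) : ℝ :=
  fderiv ℝ g x (EuclideanSpace.single i 1)

/-- second partial derivative -/
def pd2 {m : ℕ} (g : Eucl m → ℝ) (i j : Fin m) (x : Eucl m) : ℝ :=
  pd (pd g j) i x

/-- the `n`-dimensional backward heat kernel on `ℝ^{n+1}`, centred at `(Y,s)` -/
def bkernel {n : ℕ} (Y : Eucl (n + 1)) (s : ℝ) (X : Eucl (n + 1)) (t : ℝ) : ℝ :=
  (4 * π * (s - t)) ^ (-(n : ℝ) / 2) * Real.exp (-‖X - Y‖ ^ 2 / (4 * (s - t)))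

lemma hasFDerivAt_bk {n : ℕ} (Y : Eucl (n+1)) (s t : ℝ) (Z : Eucl (n+1)) :
    HasFDerivAt (fun W => bkernel Y s W t)
      ((-(2*(s-t))⁻¹ * bkernel Y s Z t) • innerSL ℝ (Z - Y)) Z := by
  have hfun : (fun W => bkernel Y s W t)
      = fun W : Eucl (n+1) => (4*π*(s-t)) ^ (-(n:ℝ)/2) *
        Real.exp ((-(4*(s-t))⁻¹) * ‖W - Y‖^2) := by
    funext W
    unfold bkernel
    congr 1
    congr 1
    ring
  rw [hfun]
  have H := (((((hasFDerivAt_id Z).sub_const Y).norm_sq).const_mul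
      (-(4*(s-t))⁻¹)).exp.const_mul ((4*π*(s-t)) ^ (-(n:ℝ)/2)))
  refine H.congr_fderiv ?_
  ext v
  simp [bkernel, smul_smul, div_eq_mul_inv]
  ring

lemma pd_bk {n : ℕ} (Y : Eucl (n+1)) (s t : ℝ) (i : Fin (n+1)) (Z : Eucl (n+1)) :
    pd (fun W => bkernel Y s W t) i Z
      = -(2*(s-t))⁻¹ * bkernel Y s Z t * (Z i - Y i) := by
  rw [pd, (hasFDerivAt_bk Y s t Z).fderiv]
  simp [real_inner_comm, EuclideanSpace.inner_single_left, EuclideanSpace.inner_single_right]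

lemma pd2_bk {n : ℕ} (Y : Eucl (n+1)) (s t : ℝ) (ht : t < s) (i j : Fin (n+1)) (X : Eucl (n+1)) :
    pd2 (fun W => bkernel Y s W t) i j X
      = bkernel Y s X t * ((X i - Y i) * (X j - Y j) / (4*(s-t)^2)
          - (if i = j then (1:ℝ) else 0) / (2*(s-t))) := by
  rw [pd2, pd]
  have hfun : pd (fun W => bkernel Y s W t) j
      = fun Z => -(2*(s-t))⁻¹ * bkernel Y s Z t * (Z j - Y j) := by
    funext Z; exact pd_bk Y s t j Z
  rw [hfun]
  have hproj : HasFDerivAt (fun Z : Eucl (n+1) => Z j - Y j)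
      (EuclideanSpace.proj j : Eucl (n+1) →L[ℝ] ℝ) X :=
    ((EuclideanSpace.proj j : Eucl (n+1) →L[ℝ] ℝ).hasFDerivAt).sub_const (Y j)
  have H := (((hasFDerivAt_bk Y s t X).const_mul (-(2*(s-t))⁻¹)).mul hproj)
  erw [H.fderiv]
  have hst : s - t ≠ 0 := (sub_pos.mpr ht).ne'
  rcases eq_or_ne i j with h | h
  · subst h
    simp [real_inner_comm, EuclideanSpace.inner_single_left, EuclideanSpace.inner_single_right, EuclideanSpace.single_apply]
    field_simp
    ring
  · simp [real_inner_comm, EuclideanSpace.inner_single_left, EuclideanSpace.inner_single_right, EuclideanSpace.single_apply,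
      h, Ne.symm h]
    field_simp
    ring

lemma deriv_bk {n : ℕ} (Y : Eucl (n+1)) (s t : ℝ) (ht : t < s) (X : Eucl (n+1)) :
    deriv (fun r => bkernel Y s X r) t
      = bkernel Y s X t * ((n:ℝ)/(2*(s-t)) - ‖X - Y‖^2/(4*(s-t)^2)) := by
  have hst : s - t ≠ 0 := (sub_pos.mpr ht).ne'
  have hpos : 0 < 4 * π * (s - t) := mul_pos (by positivity) (sub_pos.mpr ht)
  have h1 : HasDerivAt (fun r => 4*π*(s-r)) (-(4*π)) t := by
    simpa using ((hasDerivAt_const t s).sub (hasDerivAt_id t)).const_mul (4*π)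
  have h2 := h1.rpow_const (p := -(n:ℝ)/2) (Or.inl hpos.ne')
  have h4 : HasDerivAt (fun r => 4*(s-r)) (-4 : ℝ) t := by
    simpa using ((hasDerivAt_const t s).sub (hasDerivAt_id t)).const_mul (4:ℝ)
  have h4ne : (4:ℝ)*(s-t) ≠ 0 := by simp [hst]
  have h3 := (((hasDerivAt_const t (-‖X - Y‖^2)).div h4 h4ne)).exp
  have H := h2.mul h3
  have := H.deriv
  unfold bkernel
  erw [this]
  simp only [Pi.div_apply]
  rw [Real.rpow_sub hpos, Real.rpow_one]
  have hexp : Real.exp (-‖X - Y‖ ^ 2 / (4 * (s - t))) ≠ 0 := Real.exp_ne_zero _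
  field_simp [Real.pi_ne_zero]
  ring

/-- Huisken's kernel identity:
`(w·Dρ)²/ρ + (I − w⊗w) : D²ρ + ∂_t ρ = 0`. -/
theorem huisken_kernel_identity (n : ℕ) (s : ℝ) (Y : Eucl (n + 1))
    (w : Eucl (n + 1)) (hw : ‖w‖ = 1) (X : Eucl (n + 1)) (t : ℝ) (hts : t < s) :
    ⟪w, gradient (fun Z => bkernel Y s Z t) X⟫ ^ 2 / bkernel Y s X t
      + (∑ i, ∑ j, ((if i = j then (1 : ℝ) else 0) - w i * w j)
          * pd2 (fun Z => bkernel Y s Z t) j i X)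
      + deriv (fun r => bkernel Y s X r) t = 0 := by
  have hst : s - t ≠ 0 := (sub_pos.mpr hts).ne'
  have hpos : 0 < 4 * π * (s - t) := mul_pos (by positivity) (sub_pos.mpr hts)
  have hρ : 0 < bkernel Y s X t :=
    mul_pos (Real.rpow_pos_of_pos hpos _) (Real.exp_pos _)
  -- scalar reductions
  have hA : ∑ i, (X i - Y i) * (X i - Y i) = ‖X - Y‖^2 := by
    rw [EuclideanSpace.norm_eq, Real.sq_sqrt (Finset.sum_nonneg fun i _ => sq_nonneg _)]
    simp [PiLp.inner_apply, PiLp.sub_apply, sq]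
  have hB : ∑ i, w i * (X i - Y i) = ⟪w, X - Y⟫ := by
    simp [PiLp.inner_apply, PiLp.sub_apply, mul_comm]
  have hC : ∑ i, w i * w i = 1 := by
    have h := real_inner_self_eq_norm_sq w
    rw [hw] at h
    simp only [PiLp.inner_apply, RCLike.inner_apply, conj_trivial] at h
    linarith
  -- the gradient term
  have hgrad : ⟪w, gradient (fun Z => bkernel Y s Z t) X⟫
      = -(2*(s-t))⁻¹ * bkernel Y s X t * ⟪X - Y, w⟫ := by
    rw [real_inner_comm, gradient, InnerProductSpace.toDual_symm_apply,
      (hasFDerivAt_bk Y s t X).fderiv]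
    simp only [ContinuousLinearMap.coe_smul', Pi.smul_apply, innerSL_apply_apply, smul_eq_mul]
  -- the Hessian double sum
  have hinner : ∀ i : Fin (n+1),
      (∑ j, ((if i = j then (1 : ℝ) else 0) - w i * w j)
          * pd2 (fun Z => bkernel Y s Z t) j i X)
      = (((X i - Y i) * (X i - Y i)) * (bkernel Y s X t / (4*(s-t)^2))
          - bkernel Y s X t / (2*(s-t)))
        - (w i * (X i - Y i)) * ((∑ j, w j * (X j - Y j)) * (bkernel Y s X t / (4*(s-t)^2)))
        + (w i * w i) * (bkernel Y s X t / (2*(s-t))) := by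
    intro i
    have expand : ∀ j : Fin (n+1),
        ((if i = j then (1 : ℝ) else 0) - w i * w j)
            * pd2 (fun Z => bkernel Y s Z t) j i X
        = (if i = j then ((X i - Y i) * (X i - Y i)) * (bkernel Y s X t / (4*(s-t)^2))
              - bkernel Y s X t / (2*(s-t)) else 0)
          - (w j * (X j - Y j)) * ((w i * (X i - Y i)) * (bkernel Y s X t / (4*(s-t)^2)))
          + (if i = j then (w i * w i) * (bkernel Y s X t / (2*(s-t))) else 0) := by
      intro j
      rw [pd2_bk Y s t hts j i X]
      rcases eq_or_ne i j with h | h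
      · subst h
        simp only [eq_self_iff_true, if_true]
        ring
      · simp only [if_neg h, if_neg (Ne.symm h)]
        ring
    rw [Finset.sum_congr rfl fun j _ => expand j]
    rw [Finset.sum_add_distrib, Finset.sum_sub_distrib,
      Finset.sum_ite_eq, Finset.sum_ite_eq, ← Finset.sum_mul]
    simp only [Finset.mem_univ, if_true]
    ring
  have hsum : (∑ i, ∑ j, ((if i = j then (1 : ℝ) else 0) - w i * w j)
          * pd2 (fun Z => bkernel Y s Z t) j i X)
      = bkernel Y s X t * (‖X - Y‖^2/(4*(s-t)^2) - ((n:ℝ)+1)/(2*(s-t))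
          - ⟪w, X - Y⟫^2/(4*(s-t)^2) + 1/(2*(s-t))) := by
    rw [Finset.sum_congr rfl fun i _ => hinner i]
    rw [Finset.sum_add_distrib, Finset.sum_sub_distrib, Finset.sum_sub_distrib,
      ← Finset.sum_mul, ← Finset.sum_mul, ← Finset.sum_mul,
      hA, hB, hC, Finset.sum_const, Finset.card_univ, Fintype.card_fin, nsmul_eq_mul]
    push_cast
    ring
  rw [hgrad, hsum, deriv_bk Y s t hts X, real_inner_comm w (X - Y)]
  field_simp
  ring

end
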